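/- Single-spin free-fermion bound: let N ≥ 1, let G be a connected simple graph on Fin N, and let u : Fin N → Fin (2N) be injective. Let S_u be the set of 2N-qubit Pauli strings S_u = {→X_{u(k)}X_{u(l)}, →Y_{u(k)}Y_{u(l)} : (k,l) an edge of G}. Then dim g(S_u) ≤ N(2N−1). -/

import Mathlib

open Matrix

attribute [local instance 100] LieRing.ofAssociativeRing

/-- The four 2×2 Pauli matrices: identity, X, Y, Z. -/
noncomputable def pauli : Fin 4 → Matrix (Fin 2) (Fin 2) ℂ
  | 0 => 1
  | 1 => !![0, 1; 1, 0]
  | 2 => !![0, -Complex.I; Complex.I, 0]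
  | 3 => !![1, 0; 0, -1]

/-- The matrix of an `n`-qubit Pauli string `p : Fin n → Fin 4`,
the Kronecker product of the `pauli (p i)`. -/
noncomputable def PauliMat {n : ℕ} (p : Fin n → Fin 4) :
    Matrix (Fin n → Fin 2) (Fin n → Fin 2) ℂ :=
  Matrix.of fun x y => ∏ i, pauli (p i) (x i) (y i)

/-- The Hamiltonian algebra of a set of Pauli strings: the Lie ℝ-subalgebra of the
complex matrices generated by `{I • P(p) : p ∈ S}`. -/
noncomputable def hamAlg {n : ℕ} (S : Set (Fin n → Fin 4)) :
    LieSubalgebra ℝ (Matrix (Fin n → Fin 2) (Fin n → Fin 2) ℂ) :=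
  LieSubalgebra.lieSpan ℝ _ ((fun p => Complex.I • PauliMat p) '' S)

/-- The Pauli string `→A_iB_j`: letter `A` at `i`, letter `B` at `j`, `Z` strictly
between `i` and `j`, identity elsewhere. -/
def ladderString {n : ℕ} (i j : Fin n) (A B : Fin 4) : Fin n → Fin 4 :=
  fun k => if k = i then A else if k = j then B
    else if min i j < k ∧ k < max i j then 3 else 0

/-- The Pauli string `Z_kZ_l`. -/
def zzString {n : ℕ} (k l : Fin n) : Fin n → Fin 4 :=
  fun m => if m = k ∨ m = l then 3 else 0

/-- The Pauli string `Z_k`. -/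
def zString {n : ℕ} (k : Fin n) : Fin n → Fin 4 :=
  fun m => if m = k then 3 else 0

/-- A choice of letter: `X` if `c = 0`, `Y` if `c = 1`. -/
def ltr (c : Fin 2) : Fin 4 := if c = 0 then 1 else 2

/-- The opposite letter: `Y` if `c = 0`, `X` if `c = 1`. -/
def ltrBar (c : Fin 2) : Fin 4 := if c = 0 then 2 else 1

/-- Pauli strings of the Jordan–Wigner transformed hopping terms of one spin species,
with sites embedded via `v : Fin N → Fin (2N)` and hoppings on the edges of `G`. -/
def Sspin {N : ℕ} (G : SimpleGraph (Fin N)) (v : Fin N → Fin (2 * N)) :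
    Set (Fin (2 * N) → Fin 4) :=
  {p | ∃ k l : Fin N, G.Adj k l ∧
    (p = ladderString (v k) (v l) 1 1 ∨ p = ladderString (v k) (v l) 2 2)}

/-- Pauli strings of the Jordan–Wigner transformed free fermion model. -/
def Sfree {N : ℕ} (G : SimpleGraph (Fin N)) (u d : Fin N → Fin (2 * N)) :
    Set (Fin (2 * N) → Fin 4) :=
  Sspin G u ∪ Sspin G d

/-- Pauli strings of the model with a single on-site Coulomb interaction at fermion
site `i0` (interaction term `Z_{u i0} Z_{d i0}`). -/
def Sint {N : ℕ} (G : SimpleGraph (Fin N)) (u d : Fin N → Fin (2 * N)) (i0 : Fin N) :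
    Set (Fin (2 * N) → Fin 4) :=
  Sfree G u d ∪ {zzString (u i0) (d i0)}

/-! ### Auxiliary material: Pauli algebra -/

/-- Multiplication table of Pauli letters (Klein four-group). -/
def kmul (a b : Fin 4) : Fin 4 := ![![0,1,2,3],![1,0,3,2],![2,3,0,1],![3,2,1,0]] a b

/-- Exponent of `i` in the phase of the product of two Pauli letters. -/
def phE (a b : Fin 4) : ℕ := ![![0,0,0,0],![0,0,1,3],![0,3,0,1],![0,1,3,0]] a b

/-- Phase of the product of two Pauli letters. -/
noncomputable def ph (a b : Fin 4) : ℂ := Complex.I ^ (phE a b)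

lemma pauli_mul (a b : Fin 4) :
    pauli a * pauli b = ph a b • pauli (kmul a b) := by
  fin_cases a <;> fin_cases b <;>
    simp [pauli, ph, phE, kmul, Matrix.vecHead, Matrix.vecTail] <;>
    ext i j <;> fin_cases i <;> fin_cases j <;>
    simp [Matrix.mul_apply, Fin.sum_univ_two, Matrix.one_apply, pow_succ, Complex.I_mul_I]

lemma PauliMat_zero {n : ℕ} : PauliMat (fun _ : Fin n => 0) = 1 := by
  ext x y
  simp only [PauliMat, Matrix.of_apply, pauli, Matrix.one_apply]
  by_cases h : x = y
  · subst h; simp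
  · rw [if_neg h]
    obtain ⟨i, hi⟩ := Function.ne_iff.mp h
    exact Finset.prod_eq_zero (Finset.mem_univ i) (by simp [Matrix.one_apply, hi])

lemma PauliMat_mul {n : ℕ} (p q : Fin n → Fin 4) :
    PauliMat p * PauliMat q
      = (∏ i, ph (p i) (q i)) • PauliMat (fun i => kmul (p i) (q i)) := by
  ext x y
  simp only [Matrix.mul_apply, PauliMat, Matrix.of_apply, Matrix.smul_apply, smul_eq_mul]
  calc ∑ z : Fin n → Fin 2, (∏ i, pauli (p i) (x i) (z i)) * ∏ i, pauli (q i) (z i) (y i)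
      = ∑ z : Fin n → Fin 2, ∏ i, pauli (p i) (x i) (z i) * pauli (q i) (z i) (y i) := by
        exact Finset.sum_congr rfl fun z _ => by rw [Finset.prod_mul_distrib]
    _ = ∏ i, ∑ t : Fin 2, pauli (p i) (x i) t * pauli (q i) t (y i) := by
        rw [Finset.prod_univ_sum, Fintype.piFinset_univ]
    _ = ∏ i, (pauli (p i) * pauli (q i)) (x i) (y i) := by
        exact Finset.prod_congr rfl fun i _ => by rw [Matrix.mul_apply]
    _ = (∏ i, ph (p i) (q i)) * ∏ i, pauli (kmul (p i) (q i)) (x i) (y i) := by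
        rw [← Finset.prod_mul_distrib]
        exact Finset.prod_congr rfl fun i _ => by rw [pauli_mul]; rfl

/-- Jordan–Wigner Majorana string: `Z` below `a`, letter `ltr c` at `a`. -/
def Mstr {n : ℕ} (a : Fin n) (c : Fin 2) : Fin n → Fin 4 :=
  fun m => if m < a then 3 else if m = a then ltr c else 0

lemma ph_zero_left (b : Fin 4) : ph 0 b = 1 := by
  have : phE 0 b = 0 := by fin_cases b <;> rfl
  rw [ph, this, pow_zero]

lemma ph_right_zero (a : Fin 4) : ph a 0 = 1 := by
  have : phE a 0 = 0 := by fin_cases a <;> rfl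
  rw [ph, this, pow_zero]

lemma ph_diag (a : Fin 4) : ph a a = 1 := by
  have : phE a a = 0 := by fin_cases a <;> rfl
  rw [ph, this, pow_zero]

lemma kmul_diag (a : Fin 4) : kmul a a = 0 := by fin_cases a <;> rfl
lemma kmul_comm (a b : Fin 4) : kmul a b = kmul b a := by fin_cases a <;> fin_cases b <;> rfl
lemma kmul_zero_left (b : Fin 4) : kmul 0 b = b := by fin_cases b <;> rfl

lemma ph_ltr_three (c : Fin 2) : ph (ltr c) 3 = -ph 3 (ltr c) := by
  fin_cases c <;>
    simp [ph, phE, ltr, Matrix.vecHead, Matrix.vecTail, pow_succ, Complex.I_mul_I]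

lemma ph_ltr_ltr {c d : Fin 2} (h : c ≠ d) : ph (ltr c) (ltr d) = -ph (ltr d) (ltr c) := by
  fin_cases c <;> fin_cases d <;> first
    | exact absurd rfl h
    | simp [ph, phE, ltr, Matrix.vecHead, Matrix.vecTail, pow_succ, Complex.I_mul_I]

lemma prod_ph_single {n : ℕ} (p q : Fin n → Fin 4) (a : Fin n)
    (h : ∀ m, m ≠ a → ph (p m) (q m) = 1) :
    ∏ m, ph (p m) (q m) = ph (p a) (q a) :=
  Finset.prod_eq_single a (fun m _ hm => h m hm) (by simp)

lemma Mstr_sq {n : ℕ} (a : Fin n) (c : Fin 2) :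
    PauliMat (Mstr a c) * PauliMat (Mstr a c) = 1 := by
  rw [PauliMat_mul]
  have h2 : (fun i => kmul (Mstr a c i) (Mstr a c i)) = fun _ : Fin n => (0 : Fin 4) :=
    funext fun i => kmul_diag _
  rw [h2, PauliMat_zero, Finset.prod_congr rfl fun i _ => ph_diag _,
    Finset.prod_const_one, one_smul]

/-- The product of two Majorana strings at positions `a < b` is a ladder string. -/
lemma Mstr_mul_of_lt {n : ℕ} {a b : Fin n} (hab : a < b) (c d : Fin 2) :
    PauliMat (Mstr a c) * PauliMat (Mstr b d)
      = ph (ltr c) 3 • PauliMat (ladderString a b (kmul (ltr c) 3) (ltr d)) := by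
  rw [PauliMat_mul]
  have hstr : (fun m => kmul (Mstr a c m) (Mstr b d m))
      = ladderString a b (kmul (ltr c) 3) (ltr d) := by
    funext m
    rcases lt_trichotomy m a with hma | hma | hma
    · have hmb : m < b := hma.trans hab
      simp [Mstr, ladderString, hma, hmb, hma.ne, (hma.trans hab).ne, kmul_diag,
        min_eq_left hab.le, not_lt.mpr hma.le]
    · subst hma
      simp [Mstr, ladderString, hab, kmul]
    · rcases lt_trichotomy m b with hmb | hmb | hmb
      · simp [Mstr, ladderString, not_lt.mpr hma.le, hma.ne', hmb.ne, hmb,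
          min_eq_left hab.le, max_eq_right hab.le, hma, kmul_zero_left]
      · subst hmb
        simp [Mstr, ladderString, not_lt.mpr hma.le, hma.ne', lt_irrefl, kmul_zero_left]
      · simp [Mstr, ladderString, not_lt.mpr hma.le, not_lt.mpr hmb.le, hma.ne', hmb.ne',
          min_eq_left hab.le, max_eq_right hab.le, kmul_zero_left]
  have hph : ∏ m, ph (Mstr a c m) (Mstr b d m) = ph (ltr c) 3 := by
    rw [prod_ph_single (Mstr a c) (Mstr b d) a (fun m hm => by
      rcases lt_or_gt_of_ne hm with hma | hma
      · simp [Mstr, hma, hma.trans hab, ph_diag]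
      · simp [Mstr, not_lt.mpr hma.le, hma.ne', ph_zero_left])]
    simp [Mstr, hab, lt_irrefl]
  rw [hstr, hph]

lemma prod_ph_anti_of_lt {n : ℕ} {a b : Fin n} (hab : a < b) (c d : Fin 2) :
    ∏ m, ph (Mstr a c m) (Mstr b d m) = -∏ m, ph (Mstr b d m) (Mstr a c m) := by
  have h1 : ∏ m, ph (Mstr a c m) (Mstr b d m) = ph (ltr c) 3 := by
    rw [prod_ph_single (Mstr a c) (Mstr b d) a (fun m hm => by
      rcases lt_or_gt_of_ne hm with hma | hma
      · simp [Mstr, hma, hma.trans hab, ph_diag]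
      · simp [Mstr, not_lt.mpr hma.le, hma.ne', ph_zero_left])]
    simp [Mstr, hab, lt_irrefl]
  have h2 : ∏ m, ph (Mstr b d m) (Mstr a c m) = ph 3 (ltr c) := by
    rw [prod_ph_single (Mstr b d) (Mstr a c) a (fun m hm => by
      rcases lt_or_gt_of_ne hm with hma | hma
      · simp [Mstr, hma, hma.trans hab, ph_diag]
      · simp [Mstr, not_lt.mpr hma.le, hma.ne', ph_right_zero])]
    simp [Mstr, hab, lt_irrefl]
  rw [h1, h2, ph_ltr_three]

/-- Distinct Majorana strings anticommute. -/
lemma Mstr_anticomm {n : ℕ} {a b : Fin n} {c d : Fin 2} (h : a ≠ b ∨ c ≠ d) :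
    PauliMat (Mstr a c) * PauliMat (Mstr b d)
      = -(PauliMat (Mstr b d) * PauliMat (Mstr a c)) := by
  rw [PauliMat_mul, PauliMat_mul]
  have hk : (fun m => kmul (Mstr b d m) (Mstr a c m))
      = fun m => kmul (Mstr a c m) (Mstr b d m) := funext fun m => kmul_comm _ _
  rw [hk, ← neg_smul]
  congr 1
  rcases lt_trichotomy a b with hab | hab | hab
  · exact prod_ph_anti_of_lt hab c d
  · subst hab
    have hcd : c ≠ d := h.resolve_left (fun hh => hh rfl)
    have h1 : ∀ (x y : Fin 2), ∏ m, ph (Mstr a x m) (Mstr a y m) = ph (ltr x) (ltr y) := by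
      intro x y
      rw [prod_ph_single (Mstr a x) (Mstr a y) a (fun m hm => by
        rcases lt_or_gt_of_ne hm with hma | hma
        · simp [Mstr, hma, ph_diag]
        · simp [Mstr, not_lt.mpr hma.le, hma.ne', ph_zero_left])]
      simp [Mstr, lt_irrefl]
    rw [h1, h1, ph_ltr_ltr hcd]
  · rw [prod_ph_anti_of_lt hab d c, neg_neg]

/-! ### Abstract anticommutation lemmas in a ring -/

section RingLemmas
variable {R : Type*} [Ring R] {a b c x : R}

lemma anti_symm' (h : a * b = -(b * a)) : b * a = -(a * b) := by rw [h, neg_neg]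

lemma move_two (hxa : x * a = -(a * x)) (hxb : x * b = -(b * x)) :
    x * (a * b) = (a * b) * x := by
  rw [← mul_assoc, hxa, neg_mul, mul_assoc, hxb, mul_neg, neg_neg, ← mul_assoc]

lemma comm_four {d : R} (hac : a * c = -(c * a)) (had : a * d = -(d * a))
    (hbc : b * c = -(c * b)) (hbd : b * d = -(d * b)) :
    (a * b) * (c * d) = (c * d) * (a * b) := by
  have hb : b * (c * d) = (c * d) * b := move_two hbc hbd
  have ha : a * (c * d) = (c * d) * a := move_two hac had
  calc (a * b) * (c * d) = a * ((c * d) * b) := by rw [mul_assoc, hb]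
    _ = ((c * d) * a) * b := by rw [← mul_assoc, ha]
    _ = (c * d) * (a * b) := by rw [mul_assoc]

lemma prod_shared_left (ha : a * a = 1) (hab : a * b = -(b * a)) :
    (a * b) * (a * c) = -(b * c) := by
  calc (a * b) * (a * c) = a * ((b * a) * c) := by rw [mul_assoc, mul_assoc]
    _ = a * (-(a * b) * c) := by rw [anti_symm' hab]
    _ = -((a * a) * (b * c)) := by
        rw [neg_mul, mul_neg, ← mul_assoc, ← mul_assoc, mul_assoc a a b, ← mul_assoc,
          mul_assoc (a*a) b c]
    _ = -(b * c) := by rw [ha, one_mul]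

lemma prod_shared_right (hb : b * b = 1) (hcb : c * b = -(b * c)) :
    (a * b) * (c * b) = -(a * c) := by
  calc (a * b) * (c * b) = a * ((b * c) * b) := by rw [mul_assoc, ← mul_assoc b c b]
    _ = a * (-(c * b) * b) := by rw [anti_symm' hcb]
    _ = -((a * c) * (b * b)) := by rw [neg_mul, mul_neg, mul_assoc c b b, ← mul_assoc]
    _ = -(a * c) := by rw [hb, mul_one]

lemma lie_shared_left (hab : a * b = -(b * a)) (hac : a * c = -(c * a))
    (hbc : b * c = -(c * b)) (ha : a * a = 1) :
    ⁅a * b, a * c⁆ = -(b * c) - b * c := by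
  rw [Ring.lie_def, prod_shared_left ha hab, prod_shared_left ha hac, anti_symm' hbc, neg_neg]

lemma lie_shared_mid (hab : a * b = -(b * a)) (hbc : b * c = -(c * b))
    (hac : a * c = -(c * a)) (hb : b * b = 1) :
    ⁅a * b, b * c⁆ = a * c + a * c := by
  rw [Ring.lie_def]
  have h1 : (a * b) * (b * c) = a * c := by
    rw [mul_assoc, ← mul_assoc b b c, hb, one_mul]
  have h2 : (b * c) * (a * b) = -(a * c) := by
    calc (b * c) * (a * b) = b * ((c * a) * b) := by rw [mul_assoc, mul_assoc]
      _ = b * (-(a * c) * b) := by rw [anti_symm' hac]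
      _ = -((b * a) * (c * b)) := by
          rw [neg_mul, mul_neg, ← mul_assoc, ← mul_assoc, mul_assoc b a c, ← mul_assoc,
            mul_assoc (b*a) c b]
      _ = -((-(a * b)) * (-(b * c))) := by rw [anti_symm' hab, anti_symm' hbc]
      _ = -(a * c) := by rw [neg_mul_neg, h1]
  rw [h1, h2, sub_neg_eq_add]

lemma lie_shared_right (hab : a * b = -(b * a)) (hcb : c * b = -(b * c))
    (hac : a * c = -(c * a)) (hb : b * b = 1) :
    ⁅a * b, c * b⁆ = -(a * c) - a * c := by
  rw [Ring.lie_def, prod_shared_right hb hcb, prod_shared_right hb hab,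
    anti_symm' hac, neg_neg]

lemma lie_shared_cross (hab : a * b = -(b * a)) (hac : a * c = -(c * a))
    (hbc : b * c = -(c * b)) (ha : a * a = 1) :
    ⁅a * b, c * a⁆ = b * c + b * c := by
  rw [Ring.lie_def]
  have h1 : (a * b) * (c * a) = b * c := by
    rw [anti_symm' hac, mul_neg, prod_shared_left ha hab, neg_neg]
  have h2 : (c * a) * (a * b) = -(b * c) := by
    calc (c * a) * (a * b) = c * ((a * a) * b) := by rw [mul_assoc, ← mul_assoc a a b]
      _ = c * b := by rw [ha, one_mul]
      _ = -(b * c) := anti_symm' hbc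
  rw [h1, h2, sub_neg_eq_add]

end RingLemmas

/-! ### The Majorana family indexed by `Fin (2N)` -/

/-- The `2N` Majorana operators of one spin species. -/
noncomputable def gam {N : ℕ} (u : Fin N → Fin (2 * N)) (i : Fin (2 * N)) :
    Matrix (Fin (2 * N) → Fin 2) (Fin (2 * N) → Fin 2) ℂ :=
  PauliMat (Mstr (u ⟨i.val / 2, by have := i.isLt; omega⟩) ⟨i.val % 2, by omega⟩)

/-- Index of the `c`-th Majorana at site `k`. -/
def gidx {N : ℕ} (k : Fin N) (c : Fin 2) : Fin (2 * N) :=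
  ⟨2 * k.val + c.val, by have := k.isLt; have := c.isLt; omega⟩

lemma gam_eq {N : ℕ} (u : Fin N → Fin (2 * N)) (i : Fin (2 * N)) (k : Fin N) (c : Fin 2)
    (hk : i.val / 2 = k.val) (hc : i.val % 2 = c.val) :
    gam u i = PauliMat (Mstr (u k) c) := by
  have e1 : (⟨i.val / 2, by have := i.isLt; omega⟩ : Fin N) = k := Fin.ext hk
  have e2 : (⟨i.val % 2, by omega⟩ : Fin 2) = c := Fin.ext hc
  unfold gam
  rw [e1, e2]

lemma gam_gidx {N : ℕ} (u : Fin N → Fin (2 * N)) (k : Fin N) (c : Fin 2) :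
    gam u (gidx k c) = PauliMat (Mstr (u k) c) :=
  gam_eq u _ k c (by have := c.isLt; simp [gidx]; omega) (by have := c.isLt; simp [gidx]; omega)

lemma gam_sq {N : ℕ} (u : Fin N → Fin (2 * N)) (i : Fin (2 * N)) :
    gam u i * gam u i = 1 := Mstr_sq _ _

lemma gam_anti {N : ℕ} {u : Fin N → Fin (2 * N)} (hu : Function.Injective u)
    {i j : Fin (2 * N)} (hij : i ≠ j) :
    gam u i * gam u j = -(gam u j * gam u i) := by
  apply Mstr_anticomm
  by_cases h : i.val / 2 = j.val / 2
  · right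
    intro hc
    have hc' : i.val % 2 = j.val % 2 := congrArg Fin.val hc
    exact hij (Fin.ext (by omega))
  · left
    exact hu.ne (fun hh => h (by simpa using congrArg Fin.val hh))

/-- The candidate enveloping subspace: the real span of products of two distinct
Majorana operators. -/
noncomputable def Wspan {N : ℕ} (u : Fin N → Fin (2 * N)) :
    Submodule ℝ (Matrix (Fin (2 * N) → Fin 2) (Fin (2 * N) → Fin 2) ℂ) :=
  Submodule.span ℝ {m | ∃ i j : Fin (2 * N), i ≠ j ∧ m = gam u i * gam u j}

lemma gam_mul_mem {N : ℕ} (u : Fin N → Fin (2 * N)) {i j : Fin (2 * N)} (hij : i ≠ j) :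
    gam u i * gam u j ∈ Wspan u :=
  Submodule.subset_span ⟨i, j, hij, rfl⟩

/-- Closure of `Wspan` under bracket, on the generators. -/
lemma lie_gam_mem {N : ℕ} {u : Fin N → Fin (2 * N)} (hu : Function.Injective u)
    {i j k l : Fin (2 * N)} (hij : i ≠ j) (hkl : k ≠ l) :
    ⁅gam u i * gam u j, gam u k * gam u l⁆ ∈ Wspan u := by
  by_cases hik : i = k
  · subst hik
    by_cases hjl : j = l
    · subst hjl; rw [lie_self]; exact zero_mem _
    · rw [lie_shared_left (gam_anti hu hij) (gam_anti hu hkl) (gam_anti hu hjl) (gam_sq u i)]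
      exact sub_mem (neg_mem (gam_mul_mem u hjl)) (gam_mul_mem u hjl)
  · by_cases hil : i = l
    · subst hil
      by_cases hjk : j = k
      · subst hjk
        rw [gam_anti hu (Ne.symm hij), lie_neg, lie_self, neg_zero]
        exact zero_mem _
      · rw [lie_shared_cross (gam_anti hu hij) (gam_anti hu (Ne.symm hkl))
          (gam_anti hu hjk) (gam_sq u i)]
        exact add_mem (gam_mul_mem u hjk) (gam_mul_mem u hjk)
    · by_cases hjk : j = k
      · subst hjk
        rw [lie_shared_mid (gam_anti hu hij) (gam_anti hu hkl) (gam_anti hu hil) (gam_sq u j)]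
        exact add_mem (gam_mul_mem u hil) (gam_mul_mem u hil)
      · by_cases hjl : j = l
        · subst hjl
          rw [lie_shared_right (gam_anti hu hij) (gam_anti hu (Ne.symm hjk)) (gam_anti hu hik) (gam_sq u j)]
          exact sub_mem (neg_mem (gam_mul_mem u hik)) (gam_mul_mem u hik)
        · rw [Ring.lie_def, comm_four (gam_anti hu hik) (gam_anti hu hil)
            (gam_anti hu hjk) (gam_anti hu hjl), sub_self]
          exact zero_mem _

lemma ladder_symm_same {n : ℕ} (i j : Fin n) (A : Fin 4) :
    ladderString i j A A = ladderString j i A A := by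
  funext m
  by_cases h1 : m = i <;> by_cases h2 : m = j <;>
    simp [ladderString, h1, h2, min_comm, max_comm]

lemma ph_two_three : ph 2 3 = Complex.I := by
  simp [ph, phE, Matrix.vecHead, Matrix.vecTail]

lemma ph_one_three : ph 1 3 = -Complex.I := by
  simp [ph, phE, Matrix.vecHead, Matrix.vecTail, pow_succ, Complex.I_mul_I]

/-- The generators of the Hamiltonian algebra lie in `Wspan`. -/
lemma gen_mem_of_lt {N : ℕ} (u : Fin N → Fin (2 * N)) {k l : Fin N} (h : u k < u l)
    (A : Fin 4) (hA : A = 1 ∨ A = 2) :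
    Complex.I • PauliMat (ladderString (u k) (u l) A A) ∈ Wspan u := by
  rcases hA with hA | hA <;> subst hA
  · -- X-X ladder: use Majoranas (k,1) and (l,0)
    have hmul := Mstr_mul_of_lt h 1 0
    have hltr1 : ltr 1 = 2 := rfl
    have hltr0 : ltr 0 = 1 := rfl
    have hk23 : kmul 2 3 = 1 := rfl
    rw [hltr1, hltr0, hk23, ph_two_three] at hmul
    rw [← gam_gidx u k 1, ← gam_gidx u l 0] at hmul
    rw [← hmul]
    exact gam_mul_mem u (by
      intro hh
      have := congrArg Fin.val hh
      simp [gidx] at this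
      omega)
  · -- Y-Y ladder: use Majoranas (k,0) and (l,1)
    have hmul := Mstr_mul_of_lt h 0 1
    have hltr1 : ltr 1 = 2 := rfl
    have hltr0 : ltr 0 = 1 := rfl
    have hk13 : kmul 1 3 = 2 := rfl
    rw [hltr1, hltr0, hk13, ph_one_three] at hmul
    rw [← gam_gidx u k 0, ← gam_gidx u l 1] at hmul
    have : Complex.I • PauliMat (ladderString (u k) (u l) 2 2)
        = -(gam u (gidx k 0) * gam u (gidx l 1)) := by
      rw [hmul, ← neg_smul, neg_neg]
    rw [this]
    exact neg_mem (gam_mul_mem u (by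
      intro hh
      have := congrArg Fin.val hh
      simp [gidx] at this
      omega))

/-- Symmetrized product of two Majoranas, as a function on unordered pairs. -/
noncomputable def gpair {N : ℕ} (u : Fin N → Fin (2 * N)) :
    Sym2 (Fin (2 * N)) → Matrix (Fin (2 * N) → Fin 2) (Fin (2 * N) → Fin 2) ℂ :=
  Sym2.lift ⟨fun i j => gam u (min i j) * gam u (max i j),
    fun i j => by dsimp only; rw [inf_comm, sup_comm]⟩

set_option maxHeartbeats 1000000 in
/-- Single-spin free-fermion bound: the Hamiltonian algebra of one spin species of the
Jordan–Wigner transformed free fermion model has dimension at most `N(2N − 1)`. -/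
theorem finrank_hamAlg_single_spin_le (N : ℕ) (hN : 1 ≤ N)
    (G : SimpleGraph (Fin N)) (hG : G.Connected)
    (u : Fin N → Fin (2 * N)) (hu : Function.Injective u) :
    Module.finrank ℝ (hamAlg (Sspin G u)) ≤ N * (2 * N - 1) := by
  classical
  haveI : FiniteDimensional ℝ (Matrix (Fin (2 * N) → Fin 2) (Fin (2 * N) → Fin 2) ℂ) :=
    Module.Finite.trans ℂ _
  -- the enveloping Lie subalgebra
  have Wlie : ∀ x ∈ Wspan u, ∀ y ∈ Wspan u, ⁅x, y⁆ ∈ Wspan u := by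
    have base : ∀ g ∈ {m | ∃ i j : Fin (2 * N), i ≠ j ∧ m = gam u i * gam u j},
        ∀ y ∈ Wspan u, ⁅g, y⁆ ∈ Wspan u := by
      rintro g ⟨i, j, hij, rfl⟩ y hy
      refine Submodule.span_induction ?_ ?_ ?_ ?_ hy
      · rintro z ⟨k, l, hkl, rfl⟩
        exact lie_gam_mem hu hij hkl
      · rw [lie_zero]; exact zero_mem _
      · intro x y _ _ hx hy
        rw [lie_add]; exact add_mem hx hy
      · intro r x _ hx
        rw [lie_smul]; exact Submodule.smul_mem _ r hx
    intro x hx y hy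
    refine Submodule.span_induction ?_ ?_ ?_ ?_ hx
    · intro g hg; exact base g hg y hy
    · rw [zero_lie]; exact zero_mem _
    · intro a b _ _ ha hb
      rw [add_lie]; exact add_mem ha hb
    · intro r a _ ha
      rw [smul_lie]; exact Submodule.smul_mem _ r ha
  set K : LieSubalgebra ℝ (Matrix (Fin (2 * N) → Fin 2) (Fin (2 * N) → Fin 2) ℂ) :=
    { Wspan u with lie_mem' := fun {x y} hx hy => Wlie x hx y hy } with hK
  -- hamAlg ≤ K
  have hle : hamAlg (Sspin G u) ≤ K := by
    rw [hamAlg, LieSubalgebra.lieSpan_le]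
    rintro m ⟨p, ⟨k, l, hAdj, hp | hp⟩, rfl⟩ <;> subst hp <;>
    · show _ ∈ Wspan u
      rcases (hu.ne hAdj.ne).lt_or_gt with h | h
      · exact gen_mem_of_lt u h _ (by simp)
      · rw [ladder_symm_same]
        exact gen_mem_of_lt u h _ (by simp)
  -- the finite spanning set
  set B : Finset (Matrix (Fin (2 * N) → Fin 2) (Fin (2 * N) → Fin 2) ℂ) :=
    (Finset.univ.filter fun σ : Sym2 (Fin (2 * N)) => ¬ σ.IsDiag).image (gpair u) with hB
  have hWB : Wspan u ≤ Submodule.span ℝ (B : Set _) := by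
    rw [Wspan, Submodule.span_le]
    rintro m ⟨i, j, hij, rfl⟩
    have hmem : ∀ (i j : Fin (2 * N)), i < j →
        gam u i * gam u j ∈ Submodule.span ℝ (B : Set _) := by
      intro i j h
      apply Submodule.subset_span
      refine Finset.mem_coe.mpr (Finset.mem_image.mpr ⟨s(i, j), ?_, ?_⟩)
      · simp [Sym2.mk_isDiag_iff, h.ne]
      · show Sym2.lift _ s(i,j) = _
        rw [Sym2.lift_mk]
        simp [min_eq_left h.le, max_eq_right h.le]
    rcases hij.lt_or_gt with h | h
    · exact hmem i j h
    · rw [gam_anti hu hij]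
      exact neg_mem (hmem j i h)
  have hcard : B.card ≤ N * (2 * N - 1) := by
    calc B.card ≤ (Finset.univ.filter fun σ : Sym2 (Fin (2 * N)) => ¬ σ.IsDiag).card :=
          Finset.card_image_le
      _ = Fintype.card {σ : Sym2 (Fin (2 * N)) // ¬ σ.IsDiag} := (Fintype.card_subtype _).symm
      _ = (Fintype.card (Fin (2 * N))).choose 2 := Sym2.card_subtype_not_diag
      _ = (2 * N) * (2 * N - 1) / 2 := by rw [Fintype.card_fin, Nat.choose_two_right]
      _ = N * (2 * N - 1) := by rw [mul_assoc, Nat.mul_div_cancel_left _ (by norm_num : 0 < 2)]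
  have hsub : (hamAlg (Sspin G u)).toSubmodule ≤ Submodule.span ℝ (B : Set _) :=
    fun x hx => hWB (hle hx)
  have h2 : Module.finrank ℝ (hamAlg (Sspin G u)).toSubmodule
      ≤ Module.finrank ℝ (Submodule.span ℝ (B : Set _)) := Submodule.finrank_mono hsub
  exact le_trans h2 (le_trans (finrank_span_finset_le_card B) hcard)
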